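/- Let E be a real inner product space, f : E → ℝ convex and differentiable, x* with f(x*) ≤ f(x) for all x, let r ≥ 3 be a real number and t₀ > 0. Suppose X, V, A : ℝ → E satisfy, for every t ≥ t₀: X has derivative V t at t, V has derivative A t at t, and A t + (r/t) • V t + ∇f(X t) = 0. Then for every t ≥ t₀: f(X t) − f(x*) ≤ (r−1)² E₀ / t², where E₀ = (1/2)‖X t₀ + (t₀/(r−1)) • V t₀ − x*‖² + (t₀²/(r−1)²)(f(X t₀) − f(x*)). -/

import Mathlib

open Real
open scoped RealInnerProductSpace

/-- Convergence rate of the generalized damped equation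
`Ẍ_t + (r/t) Ẋ_t + ∇f(X_t) = 0` for `r ≥ 3` (Appendix A.9 of the paper, answering
the question of Su–Boyd–Candès on the damping coefficient `3`):
`f (X t) − f x* ≤ (r−1)² E₀ / t²`, where
`E₀ = ½‖X t₀ + (t₀/(r−1)) Ẋ t₀ − x*‖² + (t₀²/(r−1)²)(f (X t₀) − f x*)`. -/
theorem generalized_nesterov_ode_rate
    {E : Type*} [NormedAddCommGroup E] [InnerProductSpace ℝ E] [CompleteSpace E]
    (f : E → ℝ) (hf : Differentiable ℝ f)
    (hconv : ∀ a b : E, f a + ⟪gradient f a, b - a⟫ ≤ f b)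
    (xstar : E) (hmin : ∀ a, f xstar ≤ f a)
    (r t₀ : ℝ) (hr : 3 ≤ r) (ht₀ : 0 < t₀)
    (X V A : ℝ → E)
    (hX : ∀ t ≥ t₀, HasDerivAt X (V t) t)
    (hV : ∀ t ≥ t₀, HasDerivAt V (A t) t)
    (hODE : ∀ t ≥ t₀, A t + (r / t) • V t + gradient f (X t) = 0) :
    ∀ t ≥ t₀, f (X t) - f xstar ≤
      (r - 1) ^ 2 *
        ((1 / 2) * ‖X t₀ + (t₀ / (r - 1)) • V t₀ - xstar‖ ^ 2
          + (t₀ ^ 2 / (r - 1) ^ 2) * (f (X t₀) - f xstar)) / t ^ 2 := by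
  intro t ht
  set c := r - 1 with hc
  have hc2 : (2:ℝ) ≤ c := by simp [hc]; linarith
  have hc0 : (0:ℝ) < c := by linarith
  set g : ℝ → ℝ := fun s =>
    (1 / 2) * ‖X s + (s / c) • V s - xstar‖ ^ 2
      + (s ^ 2 / c ^ 2) * (f (X s) - f xstar) with hg
  set D : ℝ → ℝ := fun s =>
    -(s / c) * ⟪gradient f (X s), X s - xstar⟫
      + (2 * s / c ^ 2) * (f (X s) - f xstar) with hD
  have key : ∀ s ≥ t₀, HasDerivAt g (D s) s := by
    intro s hs
    have hs0 : (0:ℝ) < s := lt_of_lt_of_le ht₀ hs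
    have hXs := hX s hs
    have hVs := hV s hs
    have hA : A s = -((r / s) • V s + gradient f (X s)) := by
      have h := hODE s hs
      rw [add_assoc] at h
      exact eq_neg_of_add_eq_zero_left h
    -- derivative of Z s = X s + (s/c) • V s - xstar
    have hZ : HasDerivAt (fun s => X s + (s / c) • V s - xstar)
        (-(s / c) • gradient f (X s)) s := by
      have h := (hXs.add ((((hasDerivAt_id s).div_const c)).smul hVs)).sub_const xstar
      refine h.congr_deriv ?_
      rw [hA, id_eq]
      match_scalars
      · field_simp
        rw [hc]; ring
      · field_simp
    have hnormsq : HasDerivAt (fun s => (1 / 2) * ‖X s + (s / c) • V s - xstar‖ ^ 2)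
        (⟪X s + (s / c) • V s - xstar, -(s / c) • gradient f (X s)⟫) s := by
      have h := ((hZ.inner ℝ hZ).const_mul (1 / 2 : ℝ))
      have heq : (fun s => (1 / 2) * ‖X s + (s / c) • V s - xstar‖ ^ 2)
          = fun s => (1 / 2) * ⟪X s + (s / c) • V s - xstar, X s + (s / c) • V s - xstar⟫ := by
        ext u; rw [real_inner_self_eq_norm_sq]
      rw [heq]
      refine h.congr_deriv ?_
      rw [real_inner_comm]
      ring
    have hfX : HasDerivAt (fun s => f (X s)) (⟪gradient f (X s), V s⟫) s := by
      have h := ((hf (X s)).hasGradientAt.hasFDerivAt).comp_hasDerivAt s hXs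
      simpa [InnerProductSpace.toDual_apply_apply, Function.comp_def] using h
    have h2 : HasDerivAt (fun s => (s ^ 2 / c ^ 2) * (f (X s) - f xstar))
        ((2 * s / c ^ 2) * (f (X s) - f xstar)
          + (s ^ 2 / c ^ 2) * ⟪gradient f (X s), V s⟫) s := by
      have h := (((hasDerivAt_pow 2 s).div_const (c ^ 2)).mul (hfX.sub_const (f xstar)))
      refine h.congr_deriv ?_
      push_cast
      ring
    have := hnormsq.add h2
    refine this.congr_deriv ?_
    have e1 : ⟪X s + (s / c) • V s - xstar, -(s / c) • gradient f (X s)⟫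
        = -(s / c) * (⟪gradient f (X s), X s - xstar⟫
            + (s / c) * ⟪gradient f (X s), V s⟫) := by
      rw [real_inner_smul_right, real_inner_comm, inner_sub_right, inner_add_right,
        real_inner_smul_right, inner_sub_right]
      ring
    rw [e1]
    simp only [hD]
    have hcne : c ≠ 0 := hc0.ne'
    field_simp
    ring
  have hanti : AntitoneOn g (Set.Ici t₀) := by
    apply antitoneOn_of_deriv_nonpos (convex_Ici t₀)
    · exact fun s hs => ((key s hs).continuousAt).continuousWithinAt
    · intro s hs
      rw [interior_Ici] at hs
      exact ((key s (le_of_lt hs)).differentiableAt).differentiableWithinAt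
    · intro s hs
      rw [interior_Ici] at hs
      have hs' : t₀ ≤ s := le_of_lt hs
      rw [(key s hs').deriv]
      have hs0 : (0:ℝ) < s := lt_of_lt_of_le ht₀ hs'
      have hu : 0 ≤ f (X s) - f xstar := sub_nonneg.2 (hmin _)
      have hI : f (X s) - f xstar ≤ ⟪gradient f (X s), X s - xstar⟫ := by
        have h := hconv (X s) xstar
        have : ⟪gradient f (X s), xstar - X s⟫ = -⟪gradient f (X s), X s - xstar⟫ := by
          rw [← inner_neg_right]; congr 1; abel
        rw [this] at h
        linarith
      simp only [hD]
      rw [show -(s / c) * ⟪gradient f (X s), X s - xstar⟫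
            + (2 * s / c ^ 2) * (f (X s) - f xstar)
          = (s * (2 * (f (X s) - f xstar) - c * ⟪gradient f (X s), X s - xstar⟫)) / c ^ 2 from by
        field_simp; ring]
      apply div_nonpos_of_nonpos_of_nonneg _ (by positivity)
      have h1 : c * (f (X s) - f xstar) ≤ c * ⟪gradient f (X s), X s - xstar⟫ :=
        mul_le_mul_of_nonneg_left hI hc0.le
      have h3 : 2 * (f (X s) - f xstar) ≤ c * (f (X s) - f xstar) := by nlinarith
      exact mul_nonpos_of_nonneg_of_nonpos hs0.le (by linarith)
  have hGle : g t ≤ g t₀ := hanti (Set.self_mem_Ici) ht ht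
  have ht0' : (0:ℝ) < t := lt_of_lt_of_le ht₀ ht
  have hlow : (t ^ 2 / c ^ 2) * (f (X t) - f xstar) ≤ g t := by
    have : 0 ≤ (1 / 2) * ‖X t + (t / c) • V t - xstar‖ ^ 2 := by positivity
    simp only [hg]; linarith
  have h1 : (t ^ 2 / c ^ 2) * (f (X t) - f xstar) ≤ g t₀ := le_trans hlow hGle
  show f (X t) - f xstar ≤ c ^ 2 * g t₀ / t ^ 2
  rw [le_div_iff₀ (by positivity : (0:ℝ) < t ^ 2)]
  rw [div_mul_eq_mul_div, div_le_iff₀ (by positivity : (0:ℝ) < c ^ 2)] at h1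
  calc (f (X t) - f xstar) * t ^ 2 = t ^ 2 * (f (X t) - f xstar) := by ring
    _ ≤ g t₀ * c ^ 2 := h1
    _ = c ^ 2 * g t₀ := by ring
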